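/- Cauchy determinant formula: Let K be a field, m a natural number, and a, b : Fin m → K be such that a i ≠ b j for all i, j. Then the determinant of the m×m matrix with entries (a i − b j)⁻¹ equals (∏_{i<j} (a i − a j) · ∏_{i<j} (b j − b i)) / ∏_{i,j} (a i − b j). -/

import Mathlib

lemma cauchy_step {K : Type*} [Field K] (m : ℕ) (a b : Fin (m + 1) → K)
    (hab : ∀ i j, a i ≠ b j) :
    (Matrix.of fun i j => (a i - b j)⁻¹).det =
      (∏ i : Fin m, (a 0 - a i.succ)) * (∏ j, (a 0 - b j))⁻¹ *
        ((∏ i : Fin m, (a i.succ - b 0))⁻¹ * ∏ j : Fin m, (b j.succ - b 0)) *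
        (Matrix.of fun i j : Fin m => (a i.succ - b j.succ)⁻¹).det := by
  have hne : ∀ i j, a i - b j ≠ 0 := fun i j => sub_ne_zero.mpr (hab i j)
  set B : Matrix (Fin (m + 1)) (Fin (m + 1)) K :=
    Matrix.of fun i j => if i = 0 then (a 0 - b j)⁻¹ else (a i - b j)⁻¹ - (a 0 - b j)⁻¹ with hB
  set B' : Matrix (Fin (m + 1)) (Fin (m + 1)) K :=
    Matrix.of fun i j => if i = 0 then 1 else (a i - b j)⁻¹ with hB'
  set B'' : Matrix (Fin (m + 1)) (Fin (m + 1)) K :=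
    Matrix.of fun i j =>
      if j = 0 then B' i 0 else B' i j - B' i 0 with hB''
  set B''' : Matrix (Fin (m + 1)) (Fin (m + 1)) K :=
    Matrix.of fun i j =>
      if i = 0 then (if j = 0 then (1 : K) else 0)
      else if j = 0 then 1 else (a i - b j)⁻¹ with hB'''
  have h1 : (Matrix.of fun i j => (a i - b j)⁻¹).det = B.det := by
    apply Matrix.det_eq_of_forall_row_eq_smul_add_const
      (fun i => if i = 0 then (0 : K) else 1) 0 (by simp)
    intro i j
    by_cases hi : i = 0 <;> simp [hB, hi]
  have h2 : B = Matrix.of fun i j =>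
      (if i = 0 then (1 : K) else a 0 - a i) *
        (Matrix.of fun i j => (a 0 - b j)⁻¹ * B' i j) i j := by
    ext i j
    by_cases hi : i = 0
    · simp [hB, hB', hi]
    · simp only [hB, hB', Matrix.of_apply, if_neg hi]
      have h1 := hne i j
      have h2 := hne 0 j
      have h3 : (a 0 - b j) - (a i - b j) = a 0 - a i := by ring
      rw [inv_sub_inv h1 h2, h3, div_eq_mul_inv, mul_inv]
      ring
  have h3 : B'.det = B''.det := by
    rw [← Matrix.det_transpose B', ← Matrix.det_transpose B'']
    apply Matrix.det_eq_of_forall_row_eq_smul_add_const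
      (fun j => if j = 0 then (0 : K) else 1) 0 (by simp)
    intro p q
    by_cases hp : p = 0 <;> simp [hB'', hp]
  have h4 : B'' = Matrix.of fun i j =>
      (if i = 0 then (1 : K) else (a i - b 0)⁻¹) *
        (Matrix.of fun i j => (if j = 0 then (1 : K) else b j - b 0) * B''' i j) i j := by
    ext i j
    by_cases hi : i = 0 <;> by_cases hj : j = 0
    · simp [hB', hB'', hB''', hi, hj]
    · simp [hB', hB'', hB''', hi, hj]
    · simp [hB', hB'', hB''', hi, hj]
    · simp only [hB', hB'', hB''', Matrix.of_apply, if_neg hi, if_neg hj]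
      have h1 := hne i j
      have h2 := hne i 0
      have h3 : (a i - b 0) - (a i - b j) = b j - b 0 := by ring
      rw [inv_sub_inv h1 h2, h3, div_eq_mul_inv, mul_inv]
      ring
  have h5 : B'''.det = (Matrix.of fun i j : Fin m => (a i.succ - b j.succ)⁻¹).det := by
    rw [Matrix.det_succ_row_zero]
    rw [Finset.sum_eq_single 0]
    · have hsub : B'''.submatrix Fin.succ Fin.succ =
          Matrix.of fun i j : Fin m => (a i.succ - b j.succ)⁻¹ := by
        ext i j
        simp [hB''', Fin.succ_ne_zero]
      simp only [hB''', Matrix.of_apply, if_pos rfl, Fin.val_zero, pow_zero, one_mul]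
      rw [Fin.succAbove_zero, hsub]
      simp
    · intro j _ hj
      simp [hB''', hj]
    · simp
  rw [h1, h2, Matrix.det_mul_column, Matrix.det_mul_row, h3, h4,
    Matrix.det_mul_column, Matrix.det_mul_row, h5]
  simp only [Fin.prod_univ_succ, Fin.succ_ne_zero, if_false, if_true, ite_false, ite_true,
    one_mul, if_pos, Finset.prod_inv_distrib]
  ring


/-- Cauchy determinant formula: for `a b : Fin m → K` with `a i ≠ b j` for all `i, j`,
the determinant of the Cauchy matrix with entries `(a i − b j)⁻¹` equals
`(∏_{i<j} (a i − a j) · ∏_{i<j} (b j − b i)) / ∏_{i,j} (a i − b j)`. -/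
theorem cauchy_determinant {K : Type*} [Field K] (m : ℕ) (a b : Fin m → K)
    (hab : ∀ i j, a i ≠ b j) :
    (Matrix.of fun i j => (a i - b j)⁻¹).det =
      ((∏ i, ∏ j ∈ Finset.Ioi i, (a i - a j)) * ∏ i, ∏ j ∈ Finset.Ioi i, (b j - b i)) /
        ∏ i, ∏ j, (a i - b j) := by
  induction m with
  | zero => simp [Matrix.det_fin_zero]
  | succ m ih =>
    have key := ih (fun i => a i.succ) (fun j => b j.succ) (fun i j => hab _ _)
    rw [cauchy_step m a b hab, key]
    have hA : (∏ i, ∏ j ∈ Finset.Ioi i, (a i - a j)) =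
        (∏ j : Fin m, (a 0 - a j.succ)) *
          ∏ i : Fin m, ∏ j ∈ Finset.Ioi i, (a i.succ - a j.succ) := by
      rw [Fin.prod_univ_succ, Fin.prod_Ioi_zero]
      congr 1
      exact Finset.prod_congr rfl fun i _ => Fin.prod_Ioi_succ (fun j => a i.succ - a j) i
    have hBp : (∏ i, ∏ j ∈ Finset.Ioi i, (b j - b i)) =
        (∏ j : Fin m, (b j.succ - b 0)) *
          ∏ i : Fin m, ∏ j ∈ Finset.Ioi i, (b j.succ - b i.succ) := by
      rw [Fin.prod_univ_succ, Fin.prod_Ioi_zero]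
      congr 1
      exact Finset.prod_congr rfl fun i _ => Fin.prod_Ioi_succ (fun j => b j - b i.succ) i
    have hD : (∏ i, ∏ j, (a i - b j)) =
        (∏ j : Fin (m + 1), (a 0 - b j)) *
          ((∏ i : Fin m, (a i.succ - b 0)) *
            ∏ i : Fin m, ∏ j : Fin m, (a i.succ - b j.succ)) := by
      rw [Fin.prod_univ_succ]
      congr 1
      rw [← Finset.prod_mul_distrib]
      exact Finset.prod_congr rfl fun i _ => Fin.prod_univ_succ _
    rw [hA, hBp, hD]
    have hP : (∏ j : Fin (m + 1), (a 0 - b j)) ≠ 0 :=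
      Finset.prod_ne_zero_iff.mpr fun j _ => sub_ne_zero.mpr (hab 0 j)
    have hQ : (∏ i : Fin m, (a i.succ - b 0)) ≠ 0 :=
      Finset.prod_ne_zero_iff.mpr fun i _ => sub_ne_zero.mpr (hab i.succ 0)
    have hDs : (∏ i : Fin m, ∏ j : Fin m, (a i.succ - b j.succ)) ≠ 0 :=
      Finset.prod_ne_zero_iff.mpr fun i _ =>
        Finset.prod_ne_zero_iff.mpr fun j _ => sub_ne_zero.mpr (hab i.succ j.succ)
    field_simp
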